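/- Let I be an ideal of a ring R and n ∈ ℕ. Then R/I is strongly periodic if and only if R/I^n is strongly periodic. -/

import Mathlib

/-- A two-sided ideal `P` is prime if it is proper and `aRb ⊆ P` implies `a ∈ P` or `b ∈ P`. -/
def TwoSidedIdeal.IsPrime {R : Type*} [Ring R] (P : TwoSidedIdeal R) : Prop :=
  (P : Set R) ≠ Set.univ ∧ ∀ a b : R, (∀ r : R, a * r * b ∈ P) → a ∈ P ∨ b ∈ P

/-- The prime radical `P(R)`: the intersection of all prime (two-sided) ideals of `R`. -/
def primeRadical (R : Type*) [Ring R] : TwoSidedIdeal R :=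
  sInf {P : TwoSidedIdeal R | P.IsPrime}

/-- A ring is strongly periodic iff for every `a` there is `m ≥ 2` with `a - a ^ m ∈ P(R)`. -/
def StronglyPeriodicRing (R : Type*) [Ring R] : Prop :=
  ∀ a : R, ∃ m : ℕ, 2 ≤ m ∧ a - a ^ m ∈ primeRadical R

/-- The `n`-th power of a two-sided ideal: the ideal generated by products of `n` elements. -/
def TwoSidedIdeal.pow {R : Type*} [Ring R] (I : TwoSidedIdeal R) (n : ℕ) : TwoSidedIdeal R :=
  TwoSidedIdeal.span {x | ∃ f : Fin n → R, (∀ i, f i ∈ I) ∧ (List.ofFn f).prod = x}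

section aux
variable {R : Type*} [Ring R]

/-- membership in quotient prime radical -/
lemma quot_primeRadical_iff (J : TwoSidedIdeal R) (x : R) :
    J.ringCon.mk' x ∈ primeRadical J.ringCon.Quotient ↔
      ∀ P : TwoSidedIdeal R, P.IsPrime → J ≤ P → x ∈ P := by
  have hsurj : Function.Surjective (J.ringCon.mk') := fun y =>
    Quotient.inductionOn' y fun z => ⟨z, rfl⟩
  rw [primeRadical, TwoSidedIdeal.mem_sInf]
  constructor
  · intro h P hP hJP
    -- push P forward
    set Q : TwoSidedIdeal J.ringCon.Quotient := TwoSidedIdeal.mk'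
      (J.ringCon.mk' '' P)
      (show (0 : J.ringCon.Quotient) ∈ J.ringCon.mk' '' (P : Set R) from ⟨0, P.zero_mem, map_zero _⟩)
      (by rintro _ _ ⟨a, ha, rfl⟩ ⟨b, hb, rfl⟩; exact ⟨a + b, P.add_mem ha hb, map_add _ _ _⟩)
      (by rintro _ ⟨a, ha, rfl⟩; exact ⟨-a, P.neg_mem ha, map_neg _ _⟩)
      (by rintro x _ ⟨b, hb, rfl⟩
          obtain ⟨a, rfl⟩ := hsurj x
          exact ⟨a * b, P.mul_mem_left a b hb, map_mul _ _ _⟩)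
      (by rintro _ y ⟨a, ha, rfl⟩
          obtain ⟨b, rfl⟩ := hsurj y
          exact ⟨a * b, P.mul_mem_right a b ha, map_mul _ _ _⟩) with hQ
    have memQ : ∀ y : R, J.ringCon.mk' y ∈ Q ↔ y ∈ P := by
      intro y
      rw [hQ, TwoSidedIdeal.mem_mk']
      constructor
      · rintro ⟨a, ha, hay⟩
        have : J.ringCon a y := by rwa [← RingCon.eq]
        rw [J.rel_iff] at this
        have := P.add_mem (P.neg_mem (hJP this)) ha
        simpa using this
      · exact fun hy => ⟨y, hy, rfl⟩
    have hQprime : Q.IsPrime := by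
      constructor
      · intro hu
        have : (1 : J.ringCon.Quotient) ∈ Q := by
          have := Set.eq_univ_iff_forall.1 hu (1 : J.ringCon.Quotient); exact this
        have h1 : (1 : R) ∈ P := by rw [← memQ]; simpa using this
        refine hP.1 (Set.eq_univ_iff_forall.2 fun r => ?_)
        simpa using P.mul_mem_left r 1 h1
      · intro a b hab
        obtain ⟨a, rfl⟩ := hsurj a
        obtain ⟨b, rfl⟩ := hsurj b
        have : ∀ r : R, a * r * b ∈ P := fun r => by
          rw [← memQ]
          have := hab (J.ringCon.mk' r)
          simpa [map_mul] using this
        rcases hP.2 a b this with h | h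
        · exact Or.inl ((memQ a).2 h)
        · exact Or.inr ((memQ b).2 h)
    exact (memQ x).1 (h Q hQprime)
  · intro h Q hQ
    set P : TwoSidedIdeal R := Q.comap J.ringCon.mk' with hP
    have memP : ∀ y : R, y ∈ P ↔ J.ringCon.mk' y ∈ Q := fun y => TwoSidedIdeal.mem_comap _
    have hPprime : P.IsPrime := by
      constructor
      · intro hu
        have h1 : (1 : R) ∈ P := by
          have := Set.eq_univ_iff_forall.1 hu (1 : R); exact this
        refine hQ.1 (Set.eq_univ_iff_forall.2 fun r => ?_)
        obtain ⟨r, rfl⟩ := hsurj r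
        have := (memP 1).1 h1
        show J.ringCon.mk' r ∈ Q
        simpa using Q.mul_mem_left (J.ringCon.mk' r) 1 (by simpa using this)
      · intro a b hab
        have : ∀ s : J.ringCon.Quotient, J.ringCon.mk' a * s * J.ringCon.mk' b ∈ Q := by
          intro s
          obtain ⟨r, rfl⟩ := hsurj s
          have := (memP _).1 (hab r)
          simpa [map_mul] using this
        rcases hQ.2 _ _ this with h' | h'
        · exact Or.inl ((memP a).2 h')
        · exact Or.inr ((memP b).2 h')
    have hJP : J ≤ P := by
      intro y hy
      rw [memP]
      have hrel : J.ringCon y 0 := by rw [J.rel_iff, sub_zero]; exact hy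
      have h0 : J.ringCon.mk' y = J.ringCon.mk' 0 := Quotient.sound' hrel
      rw [h0, map_zero]
      exact Q.zero_mem
    exact (memP x).1 (h P hPprime hJP)
end aux

section aux2
variable {R : Type*} [Ring R]

lemma aux_descend (I P : TwoSidedIdeal R) (hP : P.IsPrime) :
    ∀ k : ℕ, (∀ f : Fin (k+1) → R, (∀ i, f i ∈ I) → (List.ofFn f).prod ∈ P) → I ≤ P := by
  intro k
  induction k with
  | zero =>
    intro H a ha
    simpa using H (fun _ => a) (fun _ => ha)
  | succ k IH =>
    intro H
    refine IH ?_
    intro g hg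
    have key : ∀ r : R, (List.ofFn g).prod * r * g 0 ∈ P := by
      intro r
      have hvals : ∀ i, (Fin.snoc g (r * g 0) : Fin (k+2) → R) i ∈ I := by
        intro i
        refine Fin.lastCases ?_ (fun j => ?_) i
        · simpa using I.mul_mem_left r (g 0) (hg 0)
        · simpa using hg j
      have := H (Fin.snoc g (r * g 0)) hvals
      rw [List.ofFn_succ', List.concat_eq_append, List.prod_append] at this
      simpa [mul_assoc] using this
    rcases hP.2 _ _ key with h | h
    · exact h
    · have : (List.ofFn g).prod = g 0 * (List.ofFn (fun i : Fin k => g i.succ)).prod := by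
        rw [List.ofFn_succ]; simp
      rw [this]
      exact P.mul_mem_right _ _ h

lemma pow_le_prime_iff (I P : TwoSidedIdeal R) (hP : P.IsPrime) {n : ℕ} (hn : 0 < n) :
    I.pow n ≤ P ↔ I ≤ P := by
  obtain ⟨m, rfl⟩ := Nat.exists_eq_succ_of_ne_zero hn.ne'
  constructor
  · intro h
    refine aux_descend I P hP m ?_
    intro f hf
    exact h (TwoSidedIdeal.subset_span ⟨f, hf, rfl⟩)
  · intro h x hx
    rw [TwoSidedIdeal.pow, TwoSidedIdeal.mem_span_iff] at hx
    refine h (hx I ?_)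
    rintro _ ⟨f, hf, rfl⟩
    rw [List.ofFn_succ]
    exact I.mul_mem_right _ _ (hf 0)
end aux2


section main
variable {R : Type*} [Ring R]

lemma sp_quot_iff (J : TwoSidedIdeal R) :
    StronglyPeriodicRing J.ringCon.Quotient ↔
      ∀ x : R, ∃ m : ℕ, 2 ≤ m ∧
        ∀ P : TwoSidedIdeal R, P.IsPrime → J ≤ P → x - x ^ m ∈ P := by
  have hsurj : Function.Surjective (J.ringCon.mk') := fun y =>
    Quotient.inductionOn' y fun z => ⟨z, rfl⟩
  constructor
  · intro h x
    obtain ⟨m, hm, hmem⟩ := h (J.ringCon.mk' x)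
    rw [← map_pow, ← map_sub] at hmem
    exact ⟨m, hm, (quot_primeRadical_iff J _).1 hmem⟩
  · intro h a
    obtain ⟨x, rfl⟩ := hsurj a
    obtain ⟨m, hm, hx⟩ := h x
    exact ⟨m, hm, by rw [← map_pow, ← map_sub]; exact (quot_primeRadical_iff J _).2 hx⟩

end main

theorem quotient_stronglyPeriodic_iff_quotient_pow {R : Type*} [Ring R]
    (I : TwoSidedIdeal R) (n : ℕ) (hn : 0 < n) :
    StronglyPeriodicRing I.ringCon.Quotient ↔
      StronglyPeriodicRing (I.pow n).ringCon.Quotient := by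
  rw [sp_quot_iff, sp_quot_iff]
  constructor <;> intro h x <;> obtain ⟨m, hm, hx⟩ := h x <;> refine ⟨m, hm, fun P hP hle => ?_⟩
  · exact hx P hP ((pow_le_prime_iff I P hP hn).1 hle)
  · exact hx P hP ((pow_le_prime_iff I P hP hn).2 hle)
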